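/- Fix α, β, γ, δ ∈ ℂ. Let q1, p1, q2, p2 : U → ℂ be differentiable on an open set U ⊆ ℂ and satisfy the Hamiltonian system of the A4-type Noumi–Yamada Hamiltonian H(t) = HIV(β,α;t;q1,p1) + HIV(δ,α+γ;t;q2,p2) + 2q1p1p2, i.e. for all t ∈ U: q1' = q1(2p1 − q1 − t) + α + 2q1p2, p1' = −(p1(p1 − 2q1 − t) + β + 2p1p2), q2' = q2(2p2 − q2 − t) + α + γ + 2q1p1, p2' = −(p2(p2 − 2q2 − t) + δ). Define f1 := −q1, f2 := p1, f3 := q1 − q2, f4 := p2, f0(t) := t − f1 − f2 − f3 − f4, and α1 := −α, α2 := −β, α3 := −γ, α4 := −δ, α0 := 1 + α + β + γ + δ. Then for every i ∈ ℤ/5ℤ and every t ∈ U: fᵢ'(t) = fᵢ(f_{i+1} − f_{i+2} + f_{i+3} − f_{i+4}) + αᵢ, where the indices are taken modulo 5. That is, the Hamiltonian system of H_NY^{A4} is the Noumi–Yamada system of type A4^{(1)}. -/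

import Mathlib

open Filter Topology

/-- `HIV(a,b;t;q,p) = p q (p − q − t) + b p + a q`. -/
noncomputable def HIV (a b t q p : ℂ) : ℂ := p * q * (p - q - t) + b * p + a * q

/-- The Hamiltonian system of the A4-type Noumi–Yamada Hamiltonian
`H = HIV(β,α;t;q1,p1) + HIV(δ,α+γ;t;q2,p2) + 2 q1 p1 p2`
is the Noumi–Yamada system of type `A4^(1)`:
`fᵢ' = fᵢ(f_{i+1} − f_{i+2} + f_{i+3} − f_{i+4}) + αᵢ` for `i ∈ ℤ/5ℤ`. -/
theorem stmt2 (α β γ δ : ℂ) (U : Set ℂ) (hU : IsOpen U)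
    (q1 p1 q2 p2 : ℂ → ℂ)
    (hq1 : ∀ t ∈ U, HasDerivAt q1 (q1 t * (2 * p1 t - q1 t - t) + α + 2 * q1 t * p2 t) t)
    (hp1 : ∀ t ∈ U, HasDerivAt p1 (-(p1 t * (p1 t - 2 * q1 t - t) + β + 2 * p1 t * p2 t)) t)
    (hq2 : ∀ t ∈ U, HasDerivAt q2 (q2 t * (2 * p2 t - q2 t - t) + α + γ + 2 * q1 t * p1 t) t)
    (hp2 : ∀ t ∈ U, HasDerivAt p2 (-(p2 t * (p2 t - 2 * q2 t - t) + δ)) t)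
    (f : Fin 5 → ℂ → ℂ)
    (hf : f = ![fun t => t - (-(q1 t)) - p1 t - (q1 t - q2 t) - p2 t,
                fun t => -(q1 t),
                p1,
                fun t => q1 t - q2 t,
                p2])
    (a : Fin 5 → ℂ)
    (ha : a = ![1 + α + β + γ + δ, -α, -β, -γ, -δ]) :
    ∀ i : Fin 5, ∀ t ∈ U,
      HasDerivAt (f i)
        (f i t * (f (i + 1) t - f (i + 2) t + f (i + 3) t - f (i + 4) t) + a i) t := by
  subst hf ha
  intro i t ht
  fin_cases i
  · have h := ((((hasDerivAt_id t).sub (hq1 t ht).neg).sub (hp1 t ht)).sub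
      ((hq1 t ht).sub (hq2 t ht))).sub (hp2 t ht)
    convert h using 1
    · rfl
    · rfl
    · rfl
    simp [Fin.isValue, Matrix.cons_val_zero, Matrix.cons_val_one, Matrix.head_cons,
      Matrix.cons_val_two, Matrix.tail_cons, Matrix.cons_val_three, Matrix.cons_val_four]
    ring
  · have h := (hq1 t ht).neg
    convert h using 1
    · rfl
    · rfl
    · rfl
    simp [Fin.isValue, Matrix.cons_val_zero, Matrix.cons_val_one, Matrix.head_cons,
      Matrix.cons_val_two, Matrix.tail_cons, Matrix.cons_val_three, Matrix.cons_val_four]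
    ring
  · have h := hp1 t ht
    convert h using 1
    · rfl
    simp [Fin.isValue, Matrix.cons_val_zero, Matrix.cons_val_one, Matrix.head_cons,
      Matrix.cons_val_two, Matrix.tail_cons, Matrix.cons_val_three, Matrix.cons_val_four]
    ring
  · have h := (hq1 t ht).sub (hq2 t ht)
    convert h using 1
    · rfl
    · rfl
    · rfl
    simp [Fin.isValue, Matrix.cons_val_zero, Matrix.cons_val_one, Matrix.head_cons,
      Matrix.cons_val_two, Matrix.tail_cons, Matrix.cons_val_three, Matrix.cons_val_four]
    ring
  · have h := hp2 t ht
    convert h using 1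
    · rfl
    simp [Fin.isValue, Matrix.cons_val_zero, Matrix.cons_val_one, Matrix.head_cons,
      Matrix.cons_val_two, Matrix.tail_cons, Matrix.cons_val_three, Matrix.cons_val_four]
    ring
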